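/- Let N ≥ 1, let v : Fin N → ℝ be nonnegative, and suppose some index i satisfies v i > Σ_{j ≠ i} v j. Then for every bit position k, the total value of the indices whose k-th binary bit agrees with that of i strictly exceeds the total value of the indices whose k-th bit disagrees: Σ_{j : testBit j k = testBit i k} v j > Σ_{j : testBit j k ≠ testBit i k} v j. Consequently, comparing these two sums for k = 0, 1, …, ⌈log₂ N⌉ − 1 determines every bit of i, and hence i itself. (This is the bit-by-bit identification step in the paper's Theorem 1: partitioning flows into sub-buckets by the parity of each bit of the index and comparing the function values on each pair of sub-buckets reveals the identity of the dominant flow.) -/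

import Mathlib

open scoped Classical

/-- Bit-by-bit identification of a dominant index: if `v i` exceeds the sum of all other
(nonnegative) values, then for every bit position `k` the total value of indices agreeing
with `i` on bit `k` strictly exceeds the total value of indices disagreeing with `i` on
bit `k`; consequently the bits (below `⌈log₂ N⌉`) determine `i` itself. -/
theorem stmt7 (N : ℕ) (hN : 1 ≤ N) (v : Fin N → ℝ) (hv : ∀ j, 0 ≤ v j) (i : Fin N)
    (hdom : ∑ j ∈ Finset.univ.erase i, v j < v i) :
    (∀ k : ℕ,
      ∑ j ∈ Finset.univ.filter (fun j : Fin N =>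
          Nat.testBit j.val k ≠ Nat.testBit i.val k), v j
        < ∑ j ∈ Finset.univ.filter (fun j : Fin N =>
            Nat.testBit j.val k = Nat.testBit i.val k), v j) ∧
    (∀ i' : Fin N,
      (∀ k : ℕ, k < Nat.clog 2 N → Nat.testBit i'.val k = Nat.testBit i.val k) → i' = i) := by
  constructor
  · intro k
    have h1 : ∑ j ∈ Finset.univ.filter (fun j : Fin N =>
        Nat.testBit j.val k ≠ Nat.testBit i.val k), v j ≤ ∑ j ∈ Finset.univ.erase i, v j := by
      apply Finset.sum_le_sum_of_subset_of_nonneg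
      · intro j hj
        simp only [Finset.mem_filter, Finset.mem_erase, Finset.mem_univ, and_true] at hj ⊢
        intro h; exact hj.2 (by rw [h])
      · intro j _ _; exact hv j
    have h2 : v i ≤ ∑ j ∈ Finset.univ.filter (fun j : Fin N =>
        Nat.testBit j.val k = Nat.testBit i.val k), v j := by
      apply Finset.single_le_sum (fun j _ => hv j)
      simp
    linarith
  · intro i' h
    have hpow : N ≤ 2 ^ Nat.clog 2 N := Nat.le_pow_clog one_lt_two N
    apply Fin.ext
    apply Nat.eq_of_testBit_eq
    intro k
    by_cases hk : k < Nat.clog 2 N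
    · exact h k hk
    · have hk' : 2 ^ Nat.clog 2 N ≤ 2 ^ k := Nat.pow_le_pow_right (by norm_num) (le_of_not_gt hk)
      have h1 : (i' : ℕ) < 2 ^ k := lt_of_lt_of_le i'.isLt (le_trans hpow hk')
      have h2 : (i : ℕ) < 2 ^ k := lt_of_lt_of_le i.isLt (le_trans hpow hk')
      rw [Nat.testBit_lt_two_pow h1, Nat.testBit_lt_two_pow h2]
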